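/- A ring R is Zhou nil-clean if and only if 7 is invertible in R and every square element of R is the sum of four idempotents and a nilpotent that pairwise commute. -/

import Mathlib

namespace Stmt12Aux

lemma nil_of_pow {M : Type*} [MonoidWithZero M] {x : M} {k : ℕ} (h : IsNilpotent (x ^ k)) :
    IsNilpotent x := by
  obtain ⟨n, hn⟩ := h
  exact ⟨k * n, by rwa [pow_mul]⟩

section CommRingPart

variable {S : Type*} [CommRing S]

lemma nilp_of_three {x y2 y3 y5 t2 t3 t5 : S} {K2 K3 K5 : ℕ}
    (h30 : IsNilpotent (30 : S))
    (hy2 : IsNilpotent y2) (hy3 : IsNilpotent y3) (hy5 : IsNilpotent y5)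
    (e2 : x ^ K2 = y2 + 2 * t2) (e3 : x ^ K3 = y3 + 3 * t3) (e5 : x ^ K5 = y5 + 5 * t5) :
    IsNilpotent x := by
  apply nil_of_pow (k := K2 + K3 + K5)
  have hx : x ^ (K2 + K3 + K5) =
      y2 * ((y3 + 3*t3)*(y5 + 5*t5)) + (y3 * (2*t2*(y5 + 5*t5)) + (y5 * (6*(t2*t3))
        + 30 * (t2*(t3*t5)))) := by
    rw [pow_add, pow_add, e2, e3, e5]; ring
  rw [hx, ← mem_nilradical]
  exact Ideal.add_mem _ (Ideal.mul_mem_right _ _ (mem_nilradical.2 hy2))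
    (Ideal.add_mem _ (Ideal.mul_mem_right _ _ (mem_nilradical.2 hy3))
      (Ideal.add_mem _ (Ideal.mul_mem_right _ _ (mem_nilradical.2 hy5))
        (Ideal.mul_mem_right _ _ (mem_nilradical.2 h30))))

lemma nilp_cert {a x C2 C3 C5 T2 T3 T5 : S} {K2 K3 K5 : ℕ}
    (h30 : IsNilpotent (30 : S)) (hF : IsNilpotent (a^5 - 5*a^3 + 4*a))
    (e2 : x ^ K2 = C2 * (a^5 - 5*a^3 + 4*a) + 2 * T2)
    (e3 : x ^ K3 = C3 * (a^5 - 5*a^3 + 4*a) + 3 * T3)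
    (e5 : x ^ K5 = C5 * (a^5 - 5*a^3 + 4*a) + 5 * T5) : IsNilpotent x := by
  have h : ∀ C : S, IsNilpotent (C * (a^5 - 5*a^3 + 4*a)) := fun C =>
    mem_nilradical.1 (Ideal.mul_mem_left _ _ (mem_nilradical.2 hF))
  exact nilp_of_three h30 (h C2) (h C3) (h C5) e2 e3 e5

lemma lift_idem_aux : ∀ (m : ℕ) (u : S), (u ^ 2 - u) ^ m = 0 →
    ∃ e : S, IsIdempotentElem e ∧ IsNilpotent (e - u) := by
  intro m
  induction m using Nat.strong_induction_on with
  | _ m ih =>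
    match m, ih with
    | 0, _ =>
      intro u hu
      have h1 : (1 : S) = 0 := by simpa using hu
      have hu0 : u = 0 := by
        calc u = u * 1 := (mul_one u).symm
        _ = u * 0 := by rw [h1]
        _ = 0 := mul_zero u
      exact ⟨0, by simp [IsIdempotentElem], by simp [hu0]⟩
    | 1, _ =>
      intro u hu
      have h : u ^ 2 - u = 0 := by simpa using hu
      refine ⟨u, ?_, by simp⟩
      show u * u = u
      linear_combination h
    | (k+2), ih =>
      intro u hu
      have hd : IsNilpotent (u ^ 2 - u) := ⟨k + 2, hu⟩
      have key : ((3*u^2 - 2*u^3) ^ 2 - (3*u^2 - 2*u^3)) = (u^2 - u)^2 * (4*(u^2-u) - 3) := by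
        ring
      have hpow : ((3*u^2 - 2*u^3) ^ 2 - (3*u^2 - 2*u^3)) ^ (k+1) = 0 := by
        rw [key, mul_pow, ← pow_mul]
        have h2 : 2 * (k+1) = (k+2) + k := by omega
        rw [h2, pow_add, hu, zero_mul, zero_mul]
      obtain ⟨e, he, hen⟩ := ih (k+1) (by omega) _ hpow
      refine ⟨e, he, ?_⟩
      have heq : e - u = (e - (3*u^2 - 2*u^3)) + (u^2 - u) * (1 - 2*u) := by ring
      rw [heq]
      exact Commute.isNilpotent_add (Commute.all _ _) hen
        (Commute.isNilpotent_mul_right (Commute.all _ _) hd)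

lemma lift_idem (u : S) (h : IsNilpotent (u ^ 2 - u)) :
    ∃ e : S, IsIdempotentElem e ∧ IsNilpotent (e - u) := by
  obtain ⟨m, hm⟩ := h
  exact lift_idem_aux m u hm

end CommRingPart


section CommRingPart2

variable {S : Type*} [CommRing S]

lemma five_idem_nilp {E F G K W b : S}
    (hE : IsIdempotentElem E) (hF : IsIdempotentElem F) (hG : IsIdempotentElem G)
    (hK : IsIdempotentElem K) (hW : IsNilpotent W) (hb : b = E + F + G + K + W) :
    IsNilpotent (b * (b - 1) * (b - 2) * (b - 3) * (b - 4)) := by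
  have hU : (E+F+G+K) * ((E+F+G+K) - 1) * ((E+F+G+K) - 2) * ((E+F+G+K) - 3)
      * ((E+F+G+K) - 4) = 0 := by
    linear_combination
      ((-24) + (70)*K + (-50)*K^2 + (10)*K^3 + (70)*G + (-100)*G*K + (30)*G*K^2 + (-50)*G^2 + (30)*G^2*K + (10)*G^3 + (70)*F + (-100)*F*K + (30)*F*K^2 + (-100)*F*G + (60)*F*G*K + (30)*F*G^2 + (-50)*F^2 + (30)*F^2*K + (30)*F^2*G + (10)*F^3 + (26)*E + (-35)*E*K + (10)*E*K^2 + (-35)*E*G + (20)*E*G*K + (10)*E*G^2 + (-35)*E*F + (20)*E*F*K + (20)*E*F*G + (10)*E*F^2 + (-9)*E^2 + (5)*E^2*K + (5)*E^2*G + (5)*E^2*F + (1)*E^3) * hE.eq +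
      ((-24) + (70)*K + (-50)*K^2 + (10)*K^3 + (70)*G + (-100)*G*K + (30)*G*K^2 + (-50)*G^2 + (30)*G^2*K + (10)*G^3 + (26)*F + (-35)*F*K + (10)*F*K^2 + (-35)*F*G + (20)*F*G*K + (10)*F*G^2 + (-9)*F^2 + (5)*F^2*K + (5)*F^2*G + (1)*F^3 + (30)*E + (-70)*E*K + (30)*E*K^2 + (-70)*E*G + (60)*E*G*K + (30)*E*G^2 + (-25)*E*F + (20)*E*F*K + (20)*E*F*G + (5)*E*F^2) * hF.eq +
      ((-24) + (70)*K + (-50)*K^2 + (10)*K^3 + (26)*G + (-35)*G*K + (10)*G*K^2 + (-9)*G^2 + (5)*G^2*K + (1)*G^3 + (30)*F + (-70)*F*K + (30)*F*K^2 + (-25)*F*G + (20)*F*G*K + (5)*F*G^2 + (30)*E + (-70)*E*K + (30)*E*K^2 + (-25)*E*G + (20)*E*G*K + (5)*E*G^2 + (-40)*E*F + (60)*E*F*K + (20)*E*F*G) * hG.eq +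
      ((-24) + (26)*K + (-9)*K^2 + (1)*K^3 + (30)*G + (-25)*G*K + (5)*G*K^2 + (30)*F + (-25)*F*K + (5)*F*K^2 + (-40)*F*G + (20)*F*G*K + (30)*E + (-25)*E*K + (5)*E*K^2 + (-40)*E*G + (20)*E*G*K + (-40)*E*F + (20)*E*F*K + (60)*E*F*G) * hK.eq
  have h2 : b * (b - 1) * (b - 2) * (b - 3) * (b - 4) = W *
      ((24) + (-50)*W + (35)*W^2 + (-10)*W^3 + (1)*W^4 + (-100)*(E+F+G+K) + (105)*(E+F+G+K)*W
        + (-40)*(E+F+G+K)*W^2 + (5)*(E+F+G+K)*W^3 + (105)*(E+F+G+K)^2 + (-60)*(E+F+G+K)^2*W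
        + (10)*(E+F+G+K)^2*W^2 + (-40)*(E+F+G+K)^3 + (10)*(E+F+G+K)^3*W + (5)*(E+F+G+K)^4) := by
    rw [hb]; linear_combination hU
  rw [h2]
  exact Commute.isNilpotent_mul_right (Commute.all _ _) hW

end CommRingPart2

section CommRingPart3
variable {S : Type*} [CommRing S]

lemma zhou_decomp {S : Type*} [CommRing S] (h30 : IsNilpotent (30 : S)) (a : S)
    (hF : IsNilpotent (a^5 - 5*a^3 + 4*a)) :
    ∃ p q w : S, p ^ 3 = p ∧ q ^ 3 = q ∧ IsNilpotent w ∧ a = p + q + w := by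
  have h1 : IsNilpotent ((26*a + 5*a^2 + 12*a^3 + 18*a^4)^2 - (26*a + 5*a^2 + 12*a^3 + 18*a^4)) := nilp_cert h30 hF
    (show ((26*a + 5*a^2 + 12*a^3 + 18*a^4)^2 - (26*a + 5*a^2 + 12*a^3 + 18*a^4))^2 = (881126100 + 452915719*a + 218605552*a^2 + 111656785*a^3 + 53050416*a^4 + 26555400*a^5 + 12089952*a^6 + 5613624*a^7 + 2363904*a^8 + 921456*a^9 + 279936*a^10 + 104976*a^11) * (a^5 - 5*a^3 + 4*a) + 2 * (-1762252200*a - 905831100*a^2 + 1765586700*a^3 + 909194400*a^4) by ring)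
    (show ((26*a + 5*a^2 + 12*a^3 + 18*a^4)^2 - (26*a + 5*a^2 + 12*a^3 + 18*a^4))^2 = (881126100 + 452915719*a + 218605552*a^2 + 111656785*a^3 + 53050416*a^4 + 26555400*a^5 + 12089952*a^6 + 5613624*a^7 + 2363904*a^8 + 921456*a^9 + 279936*a^10 + 104976*a^11) * (a^5 - 5*a^3 + 4*a) + 3 * (-1174834800*a - 603887400*a^2 + 1177057800*a^3 + 606129600*a^4) by ring)
    (show ((26*a + 5*a^2 + 12*a^3 + 18*a^4)^2 - (26*a + 5*a^2 + 12*a^3 + 18*a^4))^1 = (3216 + 1944*a + 432*a^2 + 324*a^3) * (a^5 - 5*a^3 + 4*a) + 5 * (-2578*a - 1421*a^2 + 2920*a^3 + 1811*a^4) by ring)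
  have h2 : IsNilpotent ((4*a + 20*a^2 + 18*a^3 + 18*a^4)^2 - (4*a + 20*a^2 + 18*a^3 + 18*a^4)) := nilp_cert h30 hF
    (show ((4*a + 20*a^2 + 18*a^3 + 18*a^4)^2 - (4*a + 20*a^2 + 18*a^3 + 18*a^4))^1 = (4104 + 2664*a + 648*a^2 + 324*a^3) * (a^5 - 5*a^3 + 4*a) + 2 * (-8210*a - 5330*a^2 + 9035*a^3 + 6275*a^4) by ring)
    (show ((4*a + 20*a^2 + 18*a^3 + 18*a^4)^2 - (4*a + 20*a^2 + 18*a^3 + 18*a^4))^2 = (1470390600 + 779067304*a + 366038408*a^2 + 193192900*a^3 + 89949024*a^4 + 46726560*a^5 + 20960208*a^6 + 10237104*a^7 + 4012416*a^8 + 1621296*a^9 + 419904*a^10 + 104976*a^11) * (a^5 - 5*a^3 + 4*a) + 3 * (-1960520800*a - 1038756400*a^2 + 1962599800*a^3 + 1040854600*a^4) by ring)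
    (show ((4*a + 20*a^2 + 18*a^3 + 18*a^4)^2 - (4*a + 20*a^2 + 18*a^3 + 18*a^4))^1 = (4104 + 2664*a + 648*a^2 + 324*a^3) * (a^5 - 5*a^3 + 4*a) + 5 * (-3284*a - 2132*a^2 + 3614*a^3 + 2510*a^4) by ring)
  have h3 : IsNilpotent ((12*a + 6*a^2 + 18*a^3 + 24*a^4)^2 - (12*a + 6*a^2 + 18*a^3 + 24*a^4)) := nilp_cert h30 hF
    (show ((12*a + 6*a^2 + 18*a^3 + 24*a^4)^2 - (12*a + 6*a^2 + 18*a^3 + 24*a^4))^1 = (5112 + 3492*a + 864*a^2 + 576*a^3) * (a^5 - 5*a^3 + 4*a) + 2 * (-10230*a - 6915*a^2 + 11115*a^3 + 7800*a^4) by ring)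
    (show ((12*a + 6*a^2 + 18*a^3 + 24*a^4)^2 - (12*a + 6*a^2 + 18*a^3 + 24*a^4))^1 = (5112 + 3492*a + 864*a^2 + 576*a^3) * (a^5 - 5*a^3 + 4*a) + 3 * (-6820*a - 4610*a^2 + 7410*a^3 + 5200*a^4) by ring)
    (show ((12*a + 6*a^2 + 18*a^3 + 24*a^4)^2 - (12*a + 6*a^2 + 18*a^3 + 24*a^4))^1 = (5112 + 3492*a + 864*a^2 + 576*a^3) * (a^5 - 5*a^3 + 4*a) + 5 * (-4092*a - 2766*a^2 + 4446*a^3 + 3120*a^4) by ring)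
  have h4 : IsNilpotent ((18*a + 6*a^2 + 12*a^3 + 24*a^4)^2 - (18*a + 6*a^2 + 12*a^3 + 24*a^4)) := nilp_cert h30 hF
    (show ((18*a + 6*a^2 + 12*a^3 + 24*a^4)^2 - (18*a + 6*a^2 + 12*a^3 + 24*a^4))^1 = (3888 + 3312*a + 576*a^2 + 576*a^3) * (a^5 - 5*a^3 + 4*a) + 2 * (-7785*a - 6465*a^2 + 8670*a^3 + 7350*a^4) by ring)
    (show ((18*a + 6*a^2 + 12*a^3 + 24*a^4)^2 - (18*a + 6*a^2 + 12*a^3 + 24*a^4))^1 = (3888 + 3312*a + 576*a^2 + 576*a^3) * (a^5 - 5*a^3 + 4*a) + 3 * (-5190*a - 4310*a^2 + 5780*a^3 + 4900*a^4) by ring)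
    (show ((18*a + 6*a^2 + 12*a^3 + 24*a^4)^2 - (18*a + 6*a^2 + 12*a^3 + 24*a^4))^1 = (3888 + 3312*a + 576*a^2 + 576*a^3) * (a^5 - 5*a^3 + 4*a) + 5 * (-3114*a - 2586*a^2 + 3468*a^3 + 2940*a^4) by ring)
  have ho12 : IsNilpotent ((26*a + 5*a^2 + 12*a^3 + 18*a^4) * (4*a + 20*a^2 + 18*a^3 + 18*a^4)) := nilp_cert h30 hF
    (show ((26*a + 5*a^2 + 12*a^3 + 18*a^4) * (4*a + 20*a^2 + 18*a^3 + 18*a^4))^1 = (3570 + 2286*a + 540*a^2 + 324*a^3) * (a^5 - 5*a^3 + 4*a) + 2 * (-7140*a - 4520*a^2 + 8115*a^3 + 5375*a^4) by ring)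
    (show ((26*a + 5*a^2 + 12*a^3 + 18*a^4) * (4*a + 20*a^2 + 18*a^3 + 18*a^4))^2 = (1144266600 + 595885800*a + 284399400*a^2 + 147292504*a^3 + 69460680*a^4 + 35249112*a^5 + 15937560*a^6 + 7602660*a^7 + 3032640*a^8 + 1248048*a^9 + 349920*a^10 + 104976*a^11) * (a^5 - 5*a^3 + 4*a) + 3 * (-1525688800*a - 794514400*a^2 + 1527911800*a^3 + 796756600*a^4) by ring)
    (show ((26*a + 5*a^2 + 12*a^3 + 18*a^4) * (4*a + 20*a^2 + 18*a^3 + 18*a^4))^1 = (3570 + 2286*a + 540*a^2 + 324*a^3) * (a^5 - 5*a^3 + 4*a) + 5 * (-2856*a - 1808*a^2 + 3246*a^3 + 2150*a^4) by ring)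
  have ho34 : IsNilpotent ((12*a + 6*a^2 + 18*a^3 + 24*a^4) * (18*a + 6*a^2 + 12*a^3 + 24*a^4)) := nilp_cert h30 hF
    (show ((12*a + 6*a^2 + 18*a^3 + 24*a^4) * (18*a + 6*a^2 + 12*a^3 + 24*a^4))^1 = (4500 + 3384*a + 720*a^2 + 576*a^3) * (a^5 - 5*a^3 + 4*a) + 2 * (-9000*a - 6660*a^2 + 9900*a^3 + 7560*a^4) by ring)
    (show ((12*a + 6*a^2 + 18*a^3 + 24*a^4) * (18*a + 6*a^2 + 12*a^3 + 24*a^4))^1 = (4500 + 3384*a + 720*a^2 + 576*a^3) * (a^5 - 5*a^3 + 4*a) + 3 * (-6000*a - 4440*a^2 + 6600*a^3 + 5040*a^4) by ring)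
    (show ((12*a + 6*a^2 + 18*a^3 + 24*a^4) * (18*a + 6*a^2 + 12*a^3 + 24*a^4))^1 = (4500 + 3384*a + 720*a^2 + 576*a^3) * (a^5 - 5*a^3 + 4*a) + 5 * (-3600*a - 2664*a^2 + 3960*a^3 + 3024*a^4) by ring)
  have hmain : IsNilpotent (a - ((26*a + 5*a^2 + 12*a^3 + 18*a^4) - (4*a + 20*a^2 + 18*a^3 + 18*a^4) + (12*a + 6*a^2 + 18*a^3 + 24*a^4) - (18*a + 6*a^2 + 12*a^3 + 24*a^4))) := nilp_cert h30 hF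
    (show (a - ((26*a + 5*a^2 + 12*a^3 + 18*a^4) - (4*a + 20*a^2 + 18*a^3 + 18*a^4) + (12*a + 6*a^2 + 18*a^3 + 24*a^4) - (18*a + 6*a^2 + 12*a^3 + 24*a^4)))^3 = (-10125 + 3375*a) * (a^5 - 5*a^3 + 4*a) + 2 * (20250*a - 6750*a^2 - 27000*a^3 + 13500*a^4) by ring)
    (show (a - ((26*a + 5*a^2 + 12*a^3 + 18*a^4) - (4*a + 20*a^2 + 18*a^3 + 18*a^4) + (12*a + 6*a^2 + 18*a^3 + 24*a^4) - (18*a + 6*a^2 + 12*a^3 + 24*a^4)))^1 = 0 * (a^5 - 5*a^3 + 4*a) + 3 * (-5*a + 5*a^2) by ring)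
    (show (a - ((26*a + 5*a^2 + 12*a^3 + 18*a^4) - (4*a + 20*a^2 + 18*a^3 + 18*a^4) + (12*a + 6*a^2 + 18*a^3 + 24*a^4) - (18*a + 6*a^2 + 12*a^3 + 24*a^4)))^1 = 0 * (a^5 - 5*a^3 + 4*a) + 5 * (-3*a + 3*a^2) by ring)
  obtain ⟨e1, he1, hd1⟩ := lift_idem _ h1
  obtain ⟨f1, hf1, hd2⟩ := lift_idem _ h2
  obtain ⟨e2, he2, hd3⟩ := lift_idem _ h3
  obtain ⟨f2, hf2, hd4⟩ := lift_idem _ h4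
  have horth1 : e1 * f1 = 0 := by
    refine (he1.mul hf1).eq_zero_of_isNilpotent ?_
    have hh : e1 * f1 = (26*a + 5*a^2 + 12*a^3 + 18*a^4) * (4*a + 20*a^2 + 18*a^3 + 18*a^4) + ((e1 - (26*a + 5*a^2 + 12*a^3 + 18*a^4)) * (4*a + 20*a^2 + 18*a^3 + 18*a^4) + (26*a + 5*a^2 + 12*a^3 + 18*a^4) * (f1 - (4*a + 20*a^2 + 18*a^3 + 18*a^4))
        + (e1 - (26*a + 5*a^2 + 12*a^3 + 18*a^4)) * (f1 - (4*a + 20*a^2 + 18*a^3 + 18*a^4))) := by ring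
    rw [hh, ← mem_nilradical]
    exact Ideal.add_mem _ (mem_nilradical.2 ho12) (Ideal.add_mem _ (Ideal.add_mem _
      (Ideal.mul_mem_right _ _ (mem_nilradical.2 hd1))
      (Ideal.mul_mem_left _ _ (mem_nilradical.2 hd2)))
      (Ideal.mul_mem_right _ _ (mem_nilradical.2 hd1)))
  have horth2 : e2 * f2 = 0 := by
    refine (he2.mul hf2).eq_zero_of_isNilpotent ?_
    have hh : e2 * f2 = (12*a + 6*a^2 + 18*a^3 + 24*a^4) * (18*a + 6*a^2 + 12*a^3 + 24*a^4) + ((e2 - (12*a + 6*a^2 + 18*a^3 + 24*a^4)) * (18*a + 6*a^2 + 12*a^3 + 24*a^4) + (12*a + 6*a^2 + 18*a^3 + 24*a^4) * (f2 - (18*a + 6*a^2 + 12*a^3 + 24*a^4))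
        + (e2 - (12*a + 6*a^2 + 18*a^3 + 24*a^4)) * (f2 - (18*a + 6*a^2 + 12*a^3 + 24*a^4))) := by ring
    rw [hh, ← mem_nilradical]
    exact Ideal.add_mem _ (mem_nilradical.2 ho34) (Ideal.add_mem _ (Ideal.add_mem _
      (Ideal.mul_mem_right _ _ (mem_nilradical.2 hd3))
      (Ideal.mul_mem_left _ _ (mem_nilradical.2 hd4)))
      (Ideal.mul_mem_right _ _ (mem_nilradical.2 hd3)))
  refine ⟨e1 - f1, e2 - f2, a - (e1 - f1) - (e2 - f2), ?_, ?_, ?_, by ring⟩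
  · have h := he1.eq
    have h' := hf1.eq
    linear_combination (e1 + 1) * he1.eq - (f1 + 1) * hf1.eq + (3*f1 - 3*e1) * horth1
  · linear_combination (e2 + 1) * he2.eq - (f2 + 1) * hf2.eq + (3*f2 - 3*e2) * horth2
  · have hh : a - (e1 - f1) - (e2 - f2) =
        (a - ((26*a + 5*a^2 + 12*a^3 + 18*a^4) - (4*a + 20*a^2 + 18*a^3 + 18*a^4) + (12*a + 6*a^2 + 18*a^3 + 24*a^4) - (18*a + 6*a^2 + 12*a^3 + 24*a^4)))
        - (e1 - (26*a + 5*a^2 + 12*a^3 + 18*a^4)) + (f1 - (4*a + 20*a^2 + 18*a^3 + 18*a^4)) - (e2 - (12*a + 6*a^2 + 18*a^3 + 24*a^4)) + (f2 - (18*a + 6*a^2 + 12*a^3 + 24*a^4)) := by ring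
    rw [hh, ← mem_nilradical]
    refine Ideal.add_mem _ (Ideal.sub_mem _ (Ideal.add_mem _ (Ideal.sub_mem _
      (mem_nilradical.2 hmain) (mem_nilradical.2 hd1)) (mem_nilradical.2 hd2))
      (mem_nilradical.2 hd3)) (mem_nilradical.2 hd4)


lemma square_decomp {S : Type*} [CommRing S] (h30 : IsNilpotent (30 : S)) (a : S)
    (hF : IsNilpotent (a^5 - 5*a^3 + 4*a)) :
    ∃ e f w : S, IsIdempotentElem e ∧ IsIdempotentElem f ∧ IsNilpotent w ∧
      a ^ 2 = e + f + f + f + w := by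
  have h1 : IsNilpotent ((25*a^2 + 6*a^4)^2 - (25*a^2 + 6*a^4)) := nilp_cert h30 hF
    (show ((25*a^2 + 6*a^4)^2 - (25*a^2 + 6*a^4))^2 = (30144375*a + 7320025*a^3 + 1606200*a^5 + 269784*a^7 + 28080*a^9 + 1296*a^11) * (a^5 - 5*a^3 + 4*a) + 2 * (-60288750*a^2 + 60721200*a^4) by ring)
    (show ((25*a^2 + 6*a^4)^2 - (25*a^2 + 6*a^4))^2 = (30144375*a + 7320025*a^3 + 1606200*a^5 + 269784*a^7 + 28080*a^9 + 1296*a^11) * (a^5 - 5*a^3 + 4*a) + 3 * (-40192500*a^2 + 40480800*a^4) by ring)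
    (show ((25*a^2 + 6*a^4)^2 - (25*a^2 + 6*a^4))^1 = (480*a + 36*a^3) * (a^5 - 5*a^3 + 4*a) + 5 * (-389*a^2 + 575*a^4) by ring)
  have h2 : IsNilpotent ((12*a^2 + 18*a^4)^2 - (12*a^2 + 18*a^4)) := nilp_cert h30 hF
    (show ((12*a^2 + 18*a^4)^2 - (12*a^2 + 18*a^4))^1 = (2052*a + 324*a^3) * (a^5 - 5*a^3 + 4*a) + 2 * (-4110*a^2 + 4545*a^4) by ring)
    (show ((12*a^2 + 18*a^4)^2 - (12*a^2 + 18*a^4))^1 = (2052*a + 324*a^3) * (a^5 - 5*a^3 + 4*a) + 3 * (-2740*a^2 + 3030*a^4) by ring)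
    (show ((12*a^2 + 18*a^4)^2 - (12*a^2 + 18*a^4))^1 = (2052*a + 324*a^3) * (a^5 - 5*a^3 + 4*a) + 5 * (-1644*a^2 + 1818*a^4) by ring)
  have hmain : IsNilpotent (a^2 - ((25*a^2 + 6*a^4) + 3 * (12*a^2 + 18*a^4))) := nilp_cert h30 hF
    (show (a^2 - ((25*a^2 + 6*a^4) + 3 * (12*a^2 + 18*a^4)))^1 = 0 * (a^5 - 5*a^3 + 4*a) + 2 * (-30*a^2 - 30*a^4) by ring)
    (show (a^2 - ((25*a^2 + 6*a^4) + 3 * (12*a^2 + 18*a^4)))^1 = 0 * (a^5 - 5*a^3 + 4*a) + 3 * (-20*a^2 - 20*a^4) by ring)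
    (show (a^2 - ((25*a^2 + 6*a^4) + 3 * (12*a^2 + 18*a^4)))^1 = 0 * (a^5 - 5*a^3 + 4*a) + 5 * (-12*a^2 - 12*a^4) by ring)
  obtain ⟨e1, he1, hd1⟩ := lift_idem _ h1
  obtain ⟨f1, hf1, hd2⟩ := lift_idem _ h2
  refine ⟨e1, f1, a^2 - e1 - f1 - f1 - f1, he1, hf1, ?_, by ring⟩
  have hh : a^2 - e1 - f1 - f1 - f1 =
      (a^2 - ((25*a^2 + 6*a^4) + 3 * (12*a^2 + 18*a^4))) - (e1 - (25*a^2 + 6*a^4)) - 3 * (f1 - (12*a^2 + 18*a^4)) := by ring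
  rw [hh, ← mem_nilradical]
  exact Ideal.sub_mem _ (Ideal.sub_mem _ (mem_nilradical.2 hmain) (mem_nilradical.2 hd1))
    (Ideal.mul_mem_left _ _ (mem_nilradical.2 hd2))

end CommRingPart3


section CommRingPart4
variable {S : Type*} [CommRing S]

lemma bigcert_nilp (h30 : IsNilpotent (30 : S)) (a : S)
    (hN0 : IsNilpotent (a^2*(a^2-1)*(a^2-2)*(a^2-3)*(a^2-4)))
    (hN1 : IsNilpotent ((a+1)^2*((a+1)^2-1)*((a+1)^2-2)*((a+1)^2-3)*((a+1)^2-4))) :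
    IsNilpotent (a^5 - 5*a^3 + 4*a) := by
  have hy2 : IsNilpotent ((a^2) * (a^2*(a^2-1)*(a^2-2)*(a^2-3)*(a^2-4))
      + (a^2) * ((a+1)^2*((a+1)^2-1)*((a+1)^2-2)*((a+1)^2-3)*((a+1)^2-4))) := by
    rw [← mem_nilradical]
    exact Ideal.add_mem _ (Ideal.mul_mem_left _ _ (mem_nilradical.2 hN0))
      (Ideal.mul_mem_left _ _ (mem_nilradical.2 hN1))
  have hy3 : IsNilpotent ((2 + 2*a + a^3 + a^5 + a^6 + 2*a^7) * (a^2*(a^2-1)*(a^2-2)*(a^2-3)*(a^2-4))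
      + (2 + a^3 + a^5 + a^6 + a^7) * ((a+1)^2*((a+1)^2-1)*((a+1)^2-2)*((a+1)^2-3)*((a+1)^2-4))) := by
    rw [← mem_nilradical]
    exact Ideal.add_mem _ (Ideal.mul_mem_left _ _ (mem_nilradical.2 hN0))
      (Ideal.mul_mem_left _ _ (mem_nilradical.2 hN1))
  have hy5 : IsNilpotent ((2:S) * (a^2*(a^2-1)*(a^2-2)*(a^2-3)*(a^2-4))
      + 3 * ((a+1)^2*((a+1)^2-1)*((a+1)^2-2)*((a+1)^2-3)*((a+1)^2-4))) := by
    rw [← mem_nilradical]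
    exact Ideal.add_mem _ (Ideal.mul_mem_left _ _ (mem_nilradical.2 hN0))
      (Ideal.mul_mem_left _ _ (mem_nilradical.2 hN1))
  have he2 : (a^5 - 5*a^3 + 4*a)^2 = ((a^2) * (a^2*(a^2-1)*(a^2-2)*(a^2-3)*(a^2-4))
      + (a^2) * ((a+1)^2*((a+1)^2-1)*((a+1)^2-2)*((a+1)^2-3)*((a+1)^2-4))) + 2 *
      (8*a^2 + 6*a^3 - 39*a^4 - 30*a^5 + 49*a^6 + 49*a^7 - 5*a^8 - 20*a^9 - 12*a^10
        - 5*a^11 - a^12) := by ring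
  have he3 : (a^5 - 5*a^3 + 4*a)^2 = ((2 + 2*a + a^3 + a^5 + a^6 + 2*a^7) * (a^2*(a^2-1)*(a^2-2)*(a^2-3)*(a^2-4))
      + (2 + a^3 + a^5 + a^6 + a^7) * ((a+1)^2*((a+1)^2-1)*((a+1)^2-2)*((a+1)^2-3)*((a+1)^2-4))) + 3 *
      (8*a - 20*a^2 - 56*a^3 + 34*a^4 + 86*a^5 - 5*a^6 - 37*a^7 - 16*a^8 - 19*a^9 + 20*a^10
        + 62*a^11 + 16*a^12 - 34*a^13 - 25*a^14 - 9*a^15 - 4*a^16 - a^17) := by ring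
  have he5 : (a^5 - 5*a^3 + 4*a)^1 = ((2:S) * (a^2*(a^2-1)*(a^2-2)*(a^2-3)*(a^2-4))
      + 3 * ((a+1)^2*((a+1)^2-1)*((a+1)^2-2)*((a+1)^2-3)*((a+1)^2-4))) + 5 *
      (8*a - 18*a^2 - 37*a^3 + 29*a^4 + 59*a^5 + 7*a^6 - 24*a^7 - 17*a^8 - 6*a^9 - a^10) := by ring
  exact nilp_of_three h30 hy2 hy3 hy5 he2 he3 he5

lemma square_combine (h30 : IsNilpotent (30 : S)) (A W : S)
    (hA : A^5 = 5*A^3 - 4*A) (hW : IsNilpotent W) :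
    ∃ e f n : S, IsIdempotentElem e ∧ IsIdempotentElem f ∧ IsNilpotent n ∧
      (A + W)^2 = e + f + f + f + n := by
  have hFnil : IsNilpotent (A^5 - 5*A^3 + 4*A) := ⟨1, by rw [pow_one, hA]; ring⟩
  obtain ⟨e, f, n, he, hf, hn, hs⟩ := square_decomp h30 A hFnil
  refine ⟨e, f, n + (2*A)*W + W*W, he, hf, ?_, by linear_combination hs⟩
  rw [← mem_nilradical]
  exact Ideal.add_mem _ (Ideal.add_mem _ (mem_nilradical.2 hn)
    (Ideal.mul_mem_left _ _ (mem_nilradical.2 hW)))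
    (Ideal.mul_mem_left _ _ (mem_nilradical.2 hW))

end CommRingPart4

section RingPart

variable {R : Type*} [Ring R]

lemma coe_nilp_down {T : Subalgebra ℤ R} {x : ↥T} (h : IsNilpotent (x : R)) :
    IsNilpotent x := by
  obtain ⟨n, hn⟩ := h
  exact ⟨n, Subtype.ext (by rw [SubmonoidClass.coe_pow]; exact hn)⟩

lemma coe_nilp_up {T : Subalgebra ℤ R} {x : ↥T} (h : IsNilpotent x) :
    IsNilpotent (x : R) := by
  obtain ⟨n, hn⟩ := h
  exact ⟨n, by rw [← SubmonoidClass.coe_pow, hn]; rfl⟩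

lemma isUnit_seven (h : IsNilpotent (120 : R)) : IsUnit (7 : R) := by
  have h720 : IsNilpotent (720 : R) := by
    rw [show (720:R) = 120 * 6 by norm_num]
    exact Commute.isNilpotent_mul_right (show (120:R)*6 = 6*120 by norm_num) h
  have hu : IsUnit ((7:R) * 103) := by
    rw [show (7:R)*103 = 1 + 720 by norm_num]
    exact h720.isUnit_one_add
  obtain ⟨v, hv1, hv2⟩ := isUnit_iff_exists.1 hu
  have hl : (v * 103) * 7 = 1 := by
    rw [mul_assoc, show (103:R)*7 = 7*103 by norm_num]; exact hv2
  have hr : (7:R) * (103 * v) = 1 := by rw [← mul_assoc]; exact hv1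
  have hlr : v * 103 = 103 * v := by
    calc v*(103:R) = (v*103) * (7 * (103*v)) := by rw [hr, mul_one]
    _ = ((v*103)*7) * (103*v) := by rw [← mul_assoc, ← mul_assoc]
    _ = 103*v := by rw [hl, one_mul]
  exact isUnit_iff_exists.2 ⟨103*v, hr, by rw [← hlr]; exact hl⟩

lemma isNilp_30_of_120 (h : IsNilpotent (120 : R)) : IsNilpotent (30 : R) := by
  apply nil_of_pow (k := 4)
  rw [show (30:R)^4 = 120 * 6750 by norm_num]
  exact Commute.isNilpotent_mul_right (show (120:R)*6750 = 6750*120 by norm_num) h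

lemma isNilp_30_of_15120 (h7 : IsUnit (7 : R)) (h : IsNilpotent (15120 : R)) :
    IsNilpotent (30 : R) := by
  have h2160 : IsNilpotent ((7:R) * 2160) := by
    rw [show (7:R)*2160 = 15120 by norm_num]; exact h
  have hc : Commute (7:R) (2160:R) := by
    show (7:R)*2160 = 2160*7; norm_num
  have h2160' : IsNilpotent (2160 : R) := by
    obtain ⟨n, hn⟩ := h2160
    rw [hc.mul_pow] at hn
    obtain ⟨v, hv1, hv2⟩ := isUnit_iff_exists.1 (h7.pow n)
    refine ⟨n, ?_⟩
    calc (2160:R)^n = 1 * 2160^n := (one_mul _).symm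
    _ = (v * 7^n) * 2160^n := by rw [hv2]
    _ = v * (7^n * 2160^n) := by rw [mul_assoc]
    _ = 0 := by rw [hn, mul_zero]
  apply nil_of_pow (k := 4)
  rw [show (30:R)^4 = 2160 * 375 by norm_num]
  exact Commute.isNilpotent_mul_right (show (2160:R)*375 = 375*2160 by norm_num) h2160'

lemma tripotent_sum_pow {p q : R} (h : Commute p q) (hp : p^3 = p) (hq : q^3 = q) :
    (p+q)^5 = 5*(p+q)^3 - 4*(p+q) := by
  have hcomm : ∀ x ∈ ({p,q} : Set R), ∀ y ∈ ({p,q} : Set R), x*y = y*x := by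
    intro x hx y hy
    simp only [Set.mem_insert_iff, Set.mem_singleton_iff] at hx hy
    rcases hx with rfl|rfl <;> rcases hy with rfl|rfl <;> first | rfl | exact h | exact h.symm
  letI : CommRing ↥(Algebra.adjoin ℤ ({p,q} : Set R)) := Algebra.adjoinCommRingOfComm ℤ hcomm
  let P : ↥(Algebra.adjoin ℤ ({p,q} : Set R)) := ⟨p, Algebra.subset_adjoin (by simp)⟩
  let Q : ↥(Algebra.adjoin ℤ ({p,q} : Set R)) := ⟨q, Algebra.subset_adjoin (by simp)⟩
  have hp' : P^3 = P := Subtype.ext (by rw [SubmonoidClass.coe_pow]; exact hp)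
  have hq' : Q^3 = Q := Subtype.ext (by rw [SubmonoidClass.coe_pow]; exact hq)
  have key : (P+Q)^5 = 5*(P+Q)^3 - 4*(P+Q) := by
    linear_combination (P^2+5*P*Q+10*Q^2-4)*hp' + (10*P^2+5*P*Q+Q^2-4)*hq'
  have h2 := congrArg (Subtype.val) key
  rw [SubmonoidClass.coe_pow] at h2
  calc (p+q) ^5 = _ := h2
    _ = 5*(p+q)^3 - 4*(p+q) := by
        rw [AddSubgroupClass.coe_sub]
        norm_cast

lemma nilp_120_forward {a w : R} (ha : a^5 = 5*a^3 - 4*a) (hw : IsNilpotent w)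
    (h3 : (3:R) = a + w) : IsNilpotent (120 : R) := by
  have haw : a = 3 - w := by rw [h3]; exact (add_sub_cancel_right a w).symm
  rw [haw] at ha
  let T := Algebra.adjoin ℤ ({w} : Set R)
  have hcomm : ∀ x ∈ ({w} : Set R), ∀ y ∈ ({w} : Set R), x*y = y*x := by
    intro x hx y hy
    simp only [Set.mem_singleton_iff] at hx hy
    rw [hx, hy]
  letI : CommRing ↥T := Algebra.adjoinCommRingOfComm ℤ hcomm
  let W : ↥T := ⟨w, Algebra.subset_adjoin (by simp)⟩
  have hWn : IsNilpotent W := coe_nilp_down hw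
  have h5 : ((3:↥T)-W)^5 = 5*((3:↥T)-W)^3 - 4*((3:↥T)-W) := by
    apply Subtype.ext
    push_cast
    exact ha
  have h120 : (120 : ↥T) = W * (274 - 225*W + 85*W^2 - 15*W^3 + W^4) := by
    linear_combination h5
  have : IsNilpotent (120 : ↥T) := by
    rw [h120]
    exact Commute.isNilpotent_mul_right (Commute.all _ _) hWn
  have := coe_nilp_up this
  rwa [show (((120:↥T)):R) = (120:R) by norm_cast] at this

lemma sq_five_nilp {x e f g k w : R}
    (he : IsIdempotentElem e) (hf : IsIdempotentElem f) (hg : IsIdempotentElem g)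
    (hk : IsIdempotentElem k) (hw : IsNilpotent w)
    (cef : Commute e f) (ceg : Commute e g) (cek : Commute e k) (cew : Commute e w)
    (cfg : Commute f g) (cfk : Commute f k) (cfw : Commute f w)
    (cgk : Commute g k) (cgw : Commute g w) (ckw : Commute k w)
    (hx : x ^ 2 = e + f + g + k + w) :
    IsNilpotent (x^2 * (x^2 - 1) * (x^2 - 2) * (x^2 - 3) * (x^2 - 4)) := by
  have hcomm : ∀ u ∈ ({e,f,g,k,w} : Set R), ∀ v ∈ ({e,f,g,k,w} : Set R), u*v = v*u := by
    intro u hu v hv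
    simp only [Set.mem_insert_iff, Set.mem_singleton_iff] at hu hv
    rcases hu with rfl|rfl|rfl|rfl|rfl <;> rcases hv with rfl|rfl|rfl|rfl|rfl <;>
      first
        | rfl
        | exact cef | exact cef.symm | exact ceg | exact ceg.symm | exact cek | exact cek.symm
        | exact cew | exact cew.symm | exact cfg | exact cfg.symm | exact cfk | exact cfk.symm
        | exact cfw | exact cfw.symm | exact cgk | exact cgk.symm | exact cgw | exact cgw.symm
        | exact ckw | exact ckw.symm
  letI : CommRing ↥(Algebra.adjoin ℤ ({e,f,g,k,w} : Set R)) :=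
    Algebra.adjoinCommRingOfComm ℤ hcomm
  let T := Algebra.adjoin ℤ ({e,f,g,k,w} : Set R)
  let E1 : ↥T := ⟨e, Algebra.subset_adjoin (by simp)⟩
  let F1 : ↥T := ⟨f, Algebra.subset_adjoin (by simp)⟩
  let G1 : ↥T := ⟨g, Algebra.subset_adjoin (by simp)⟩
  let K1 : ↥T := ⟨k, Algebra.subset_adjoin (by simp)⟩
  let W1 : ↥T := ⟨w, Algebra.subset_adjoin (by simp)⟩
  have hE : IsIdempotentElem E1 := Subtype.ext he
  have hF : IsIdempotentElem F1 := Subtype.ext hf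
  have hG : IsIdempotentElem G1 := Subtype.ext hg
  have hK : IsIdempotentElem K1 := Subtype.ext hk
  have hW : IsNilpotent W1 := coe_nilp_down hw
  have hB := five_idem_nilp hE hF hG hK hW rfl
  have hxB : x^2 = ((E1+F1+G1+K1+W1 : ↥T) : R) := hx
  have hcoe : (((E1+F1+G1+K1+W1) * ((E1+F1+G1+K1+W1) - 1) * ((E1+F1+G1+K1+W1) - 2)
      * ((E1+F1+G1+K1+W1) - 3) * ((E1+F1+G1+K1+W1) - 4) : ↥T) : R)
      = x^2 * (x^2 - 1) * (x^2 - 2) * (x^2 - 3) * (x^2 - 4) := by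
    push_cast
    rw [← hx]
    norm_cast
  rw [← hcoe]
  exact coe_nilp_up hB

end RingPart

end Stmt12Aux


/-- A ring is Zhou nil-clean if every element is the sum of two tripotents
and a nilpotent that pairwise commute. -/
def ZhouNilClean (R : Type*) [Ring R] : Prop :=
  ∀ a : R, ∃ p q w : R, p ^ 3 = p ∧ q ^ 3 = q ∧ IsNilpotent w ∧
    Commute p q ∧ Commute p w ∧ Commute q w ∧ a = p + q + w

theorem stmt_12 (R : Type*) [Ring R] :
    ZhouNilClean R ↔
      (IsUnit (7 : R) ∧
        ∀ x : R, ∃ e f g k w : R, IsIdempotentElem e ∧ IsIdempotentElem f ∧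
          IsIdempotentElem g ∧ IsIdempotentElem k ∧ IsNilpotent w ∧
          Commute e f ∧ Commute e g ∧ Commute e k ∧ Commute e w ∧
          Commute f g ∧ Commute f k ∧ Commute f w ∧
          Commute g k ∧ Commute g w ∧ Commute k w ∧ x ^ 2 = e + f + g + k + w) := by
  constructor
  · intro hZ
    have h120 : IsNilpotent (120 : R) := by
      obtain ⟨p, q, w, hp, hq, hw, hpq, hpw, hqw, h3⟩ := hZ 3
      exact Stmt12Aux.nilp_120_forward (Stmt12Aux.tripotent_sum_pow hpq hp hq) hw h3
    refine ⟨Stmt12Aux.isUnit_seven h120, ?_⟩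
    intro x
    obtain ⟨p, q, w, hp, hq, hw, hpq, hpw, hqw, hx⟩ := hZ x
    have hcomm : ∀ u ∈ ({p,q,w} : Set R), ∀ v ∈ ({p,q,w} : Set R), u*v = v*u := by
      intro u hu v hv
      simp only [Set.mem_insert_iff, Set.mem_singleton_iff] at hu hv
      rcases hu with rfl|rfl|rfl <;> rcases hv with rfl|rfl|rfl <;>
        first
          | rfl
          | exact hpq | exact hpq.symm | exact hpw | exact hpw.symm
          | exact hqw | exact hqw.symm
    letI : CommRing ↥(Algebra.adjoin ℤ ({p,q,w} : Set R)) :=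
      Algebra.adjoinCommRingOfComm ℤ hcomm
    let T := Algebra.adjoin ℤ ({p,q,w} : Set R)
    let P : ↥T := ⟨p, Algebra.subset_adjoin (by simp)⟩
    let Q : ↥T := ⟨q, Algebra.subset_adjoin (by simp)⟩
    let W : ↥T := ⟨w, Algebra.subset_adjoin (by simp)⟩
    have hp' : P^3 = P := Subtype.ext (by rw [SubmonoidClass.coe_pow]; exact hp)
    have hq' : Q^3 = Q := Subtype.ext (by rw [SubmonoidClass.coe_pow]; exact hq)
    have hA : (P+Q)^5 = 5*(P+Q)^3 - 4*(P+Q) := by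
      linear_combination (P^2+5*P*Q+10*Q^2-4)*hp' + (10*P^2+5*P*Q+Q^2-4)*hq'
    have h30T : IsNilpotent (30 : ↥T) := by
      apply Stmt12Aux.coe_nilp_down
      rw [show (((30:↥T)):R) = (30:R) by norm_cast]
      exact Stmt12Aux.isNilp_30_of_120 h120
    have hWn : IsNilpotent W := Stmt12Aux.coe_nilp_down hw
    obtain ⟨e, f, n, he, hf, hn, hsq2⟩ := Stmt12Aux.square_combine h30T (P+Q) W hA hWn
    have ccoe : ∀ (u v : ↥T), Commute ((u:R)) ((v:R)) := fun u v =>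
      congrArg Subtype.val (mul_comm u v)
    refine ⟨(e:R), (f:R), (f:R), (f:R), ((n : ↥T) : R),
      congrArg Subtype.val he, congrArg Subtype.val hf, congrArg Subtype.val hf,
      congrArg Subtype.val hf, Stmt12Aux.coe_nilp_up hn,
      ccoe _ _, ccoe _ _, ccoe _ _, ccoe _ _, ccoe _ _, ccoe _ _, ccoe _ _, ccoe _ _,
      ccoe _ _, ccoe _ _, ?_⟩
    have hxT : x = ((P+Q+W : ↥T) : R) := hx
    have hS : ((P+Q)+W)^2 = e + f + f + f + n := hsq2
    calc x^2 = (((P+Q)+W : ↥T):R)^2 := by rw [hxT]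
    _ = ((((P+Q)+W)^2 : ↥T) : R) := (SubmonoidClass.coe_pow _ _).symm
    _ = ((e + f + f + f + n : ↥T) : R) := by rw [hS]
    _ = _ := rfl
  · rintro ⟨h7, hsq⟩
    have h30 : IsNilpotent (30:R) := by
      obtain ⟨e,f,g,k,w,he,hf,hg,hk,hw,cef,ceg,cek,cew,cfg,cfk,cfw,cgk,cgw,ckw,h9⟩ := hsq 3
      have h5 := Stmt12Aux.sq_five_nilp he hf hg hk hw cef ceg cek cew cfg cfk cfw cgk cgw ckw h9
      apply Stmt12Aux.isNilp_30_of_15120 h7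
      rwa [show ((3:R)^2*((3:R)^2-1)*((3:R)^2-2)*((3:R)^2-3)*((3:R)^2-4)) = (15120:R)
        by norm_num] at h5
    intro a
    have hN0 : IsNilpotent (a^2*(a^2-1)*(a^2-2)*(a^2-3)*(a^2-4)) := by
      obtain ⟨e,f,g,k,w,he,hf,hg,hk,hw,cef,ceg,cek,cew,cfg,cfk,cfw,cgk,cgw,ckw,hx⟩ := hsq a
      exact Stmt12Aux.sq_five_nilp he hf hg hk hw cef ceg cek cew cfg cfk cfw cgk cgw ckw hx
    have hN1 : IsNilpotent ((a+1)^2*((a+1)^2-1)*((a+1)^2-2)*((a+1)^2-3)*((a+1)^2-4)) := by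
      obtain ⟨e,f,g,k,w,he,hf,hg,hk,hw,cef,ceg,cek,cew,cfg,cfk,cfw,cgk,cgw,ckw,hx⟩ := hsq (a+1)
      exact Stmt12Aux.sq_five_nilp he hf hg hk hw cef ceg cek cew cfg cfk cfw cgk cgw ckw hx
    have hcomm : ∀ u ∈ ({a} : Set R), ∀ v ∈ ({a} : Set R), u*v = v*u := by
      intro u hu v hv
      simp only [Set.mem_singleton_iff] at hu hv
      rw [hu, hv]
    letI : CommRing ↥(Algebra.adjoin ℤ ({a} : Set R)) := Algebra.adjoinCommRingOfComm ℤ hcomm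
    let T := Algebra.adjoin ℤ ({a} : Set R)
    let A : ↥T := ⟨a, Algebra.subset_adjoin (by simp)⟩
    have h30T : IsNilpotent (30 : ↥T) := by
      apply Stmt12Aux.coe_nilp_down
      rw [show (((30:↥T)):R) = (30:R) by norm_cast]
      exact h30
    have hN0T : IsNilpotent (A^2*(A^2-1)*(A^2-2)*(A^2-3)*(A^2-4)) := by
      apply Stmt12Aux.coe_nilp_down
      rw [show ((A^2*(A^2-1)*(A^2-2)*(A^2-3)*(A^2-4) : ↥T) : R)
        = a^2*(a^2-1)*(a^2-2)*(a^2-3)*(a^2-4) by norm_cast]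
      exact hN0
    have hN1T : IsNilpotent ((A+1)^2*((A+1)^2-1)*((A+1)^2-2)*((A+1)^2-3)*((A+1)^2-4)) := by
      apply Stmt12Aux.coe_nilp_down
      rw [show (((A+1)^2*((A+1)^2-1)*((A+1)^2-2)*((A+1)^2-3)*((A+1)^2-4) : ↥T) : R)
        = (a+1)^2*((a+1)^2-1)*((a+1)^2-2)*((a+1)^2-3)*((a+1)^2-4) by norm_cast]
      exact hN1
    have hFnil : IsNilpotent (A^5 - 5*A^3 + 4*A) := Stmt12Aux.bigcert_nilp h30T A hN0T hN1T
    obtain ⟨p, q, w, hp3, hq3, hwn, hsum⟩ := Stmt12Aux.zhou_decomp h30T A hFnil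
    have ccoe : ∀ (u v : ↥T), Commute ((u:R)) ((v:R)) := fun u v =>
      congrArg Subtype.val (mul_comm u v)
    refine ⟨(p:R), (q:R), (w:R), ?_, ?_, Stmt12Aux.coe_nilp_up hwn,
      ccoe _ _, ccoe _ _, ccoe _ _, ?_⟩
    · rw [← SubmonoidClass.coe_pow, hp3]
    · rw [← SubmonoidClass.coe_pow, hq3]
    · exact congrArg Subtype.val hsum
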